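/- Let v^(1), ..., v^(T) be i.i.d. random vectors in ℝ^k such that for each s, P(‖v^(s)‖₂² > α) ≤ 1/5. Then the entrywise median vector median(v^(1),...,v^(T)) satisfies P(‖median_s(v^(s))‖₂² > 4α) ≤ exp(−c·T) for some absolute constant c > 0. -/

import Mathlib

open MeasureTheory ProbabilityTheory

/-- The median of a finite tuple of reals: the middle element (upper median)
of the sorted list of values. -/
noncomputable def medianVal {T : ℕ} (f : Fin T → ℝ) : ℝ :=
  (List.insertionSort (· ≤ ·) (List.ofFn f)).getD (T / 2) 0

/-- The coordinatewise median of a family of vectors in `ℝ^k`. -/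
noncomputable def medianVec {T k : ℕ} (v : Fin T → EuclideanSpace ℝ (Fin k)) :
    EuclideanSpace ℝ (Fin k) :=
  WithLp.toLp 2 (fun j => medianVal (fun s => v s j))

lemma card_filter_eq_countP' {T : ℕ} (q : Fin T → Prop) [DecidablePred q] :
    (Finset.univ.filter q).card = (List.finRange T).countP (fun s => decide (q s)) := by
  rw [Fin.univ_def]
  simp [Finset.filter, Finset.card, Multiset.filter_coe, List.countP_eq_length_filter]

lemma medianVal_le_count {T : ℕ} (hT : 0 < T) (f : Fin T → ℝ) :
    (T : ℝ) / 2 ≤ ((Finset.univ.filter (fun s => medianVal f ≤ f s)).card : ℝ) := by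
  classical
  set l := List.insertionSort (· ≤ ·) (List.ofFn f) with hl
  have hlen : l.length = T := by
    rw [hl, List.length_insertionSort, List.length_ofFn]
  have hsorted : l.Pairwise (· ≤ ·) := List.pairwise_insertionSort _ _
  have hidx : T / 2 < l.length := by omega
  have hm : medianVal f = l.get ⟨T / 2, hidx⟩ := by
    rw [medianVal, ← hl]
    simp [List.getD_eq_getElem?_getD, hidx]
  set m := medianVal f with hmdef
  have hdropall : ∀ x ∈ l.drop (T / 2), m ≤ x := by
    intro x hx
    obtain ⟨i, hi, rfl⟩ := List.get_of_mem hx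
    have hlt : T / 2 + (i : ℕ) < l.length := by
      have := i.isLt; simp [List.length_drop] at this; omega
    have he : (l.drop (T / 2)).get i = l.get ⟨T / 2 + i, hlt⟩ := by
      simp [List.get_eq_getElem, List.getElem_drop]
    rw [he, hm]
    exact hsorted.rel_get_of_le (by simp [Fin.le_def])
  have hcount_drop : (l.drop (T / 2)).countP (fun x => decide (m ≤ x)) = T - T / 2 := by
    rw [List.countP_eq_length.2 (by intro a ha; simpa using hdropall a ha)]
    simp [hlen]
  have hcl : T - T / 2 ≤ l.countP (fun x => decide (m ≤ x)) := by
    conv_rhs => rw [← List.take_append_drop (T / 2) l]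
    rw [List.countP_append, hcount_drop]
    omega
  have hperm : l.countP (fun x => decide (m ≤ x))
      = (List.ofFn f).countP (fun x => decide (m ≤ x)) :=
    (List.perm_insertionSort _ _).countP_eq _
  have hofn : (List.ofFn f).countP (fun x => decide (m ≤ x))
      = (Finset.univ.filter (fun s => m ≤ f s)).card := by
    rw [List.ofFn_eq_map, List.countP_map, card_filter_eq_countP']
    rfl
  have h : T - T / 2 ≤ (Finset.univ.filter (fun s => m ≤ f s)).card := by
    rw [← hofn, ← hperm]; exact hcl
  have h2 : (T : ℝ) / 2 ≤ ((T - T / 2 : ℕ) : ℝ) := by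
    have : T / 2 * 2 ≤ T := Nat.div_mul_le_self T 2
    push_cast [Nat.cast_sub (Nat.div_le_self T 2)]
    have : ((T / 2 : ℕ) : ℝ) ≤ (T : ℝ) / 2 := by
      rw [le_div_iff₀ (by norm_num)]
      exact_mod_cast this
    linarith
  exact h2.trans (by exact_mod_cast h)

lemma count_le_medianVal {T : ℕ} (hT : 0 < T) (f : Fin T → ℝ) :
    (T : ℝ) / 2 ≤ ((Finset.univ.filter (fun s => f s ≤ medianVal f)).card : ℝ) := by
  classical
  set l := List.insertionSort (· ≤ ·) (List.ofFn f) with hl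
  have hlen : l.length = T := by
    rw [hl, List.length_insertionSort, List.length_ofFn]
  have hsorted : l.Pairwise (· ≤ ·) := List.pairwise_insertionSort _ _
  have hidx : T / 2 < l.length := by omega
  have hm : medianVal f = l.get ⟨T / 2, hidx⟩ := by
    rw [medianVal, ← hl]
    simp [List.getD_eq_getElem?_getD, hidx]
  set m := medianVal f with hmdef
  have htakeall : ∀ x ∈ l.take (T / 2 + 1), x ≤ m := by
    intro x hx
    obtain ⟨i, hi, rfl⟩ := List.get_of_mem hx
    have hi' : (i : ℕ) < T / 2 + 1 := by
      have := i.isLt; simp [List.length_take, Nat.lt_min] at this; exact Nat.lt_succ_of_le this.1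
    rw [hm]
    have hli : (i : ℕ) < l.length := by omega
    have he : (l.take (T / 2 + 1)).get i = l.get ⟨i, hli⟩ := by simp
    rw [he]
    exact hsorted.rel_get_of_le (by simp [Fin.le_def]; omega)
  have hcount_take : (l.take (T / 2 + 1)).countP (fun x => decide (x ≤ m)) = T / 2 + 1 := by
    rw [List.countP_eq_length.2 (by intro a ha; simpa using htakeall a ha)]
    simp [hlen]
    omega
  have hcl : T / 2 + 1 ≤ l.countP (fun x => decide (x ≤ m)) := by
    conv_rhs => rw [← List.take_append_drop (T / 2 + 1) l]
    rw [List.countP_append, hcount_take]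
    omega
  have hperm : l.countP (fun x => decide (x ≤ m))
      = (List.ofFn f).countP (fun x => decide (x ≤ m)) :=
    (List.perm_insertionSort _ _).countP_eq _
  have hofn : (List.ofFn f).countP (fun x => decide (x ≤ m))
      = (Finset.univ.filter (fun s => f s ≤ m)).card := by
    rw [List.ofFn_eq_map, List.countP_map, card_filter_eq_countP']
    rfl
  have h : T / 2 + 1 ≤ (Finset.univ.filter (fun s => f s ≤ m)).card := by
    rw [← hofn, ← hperm]; exact hcl
  have h2 : (T : ℝ) / 2 ≤ ((T / 2 + 1 : ℕ) : ℝ) := by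
    have h3 : T ≤ (T / 2 + 1) * 2 := by omega
    rw [div_le_iff₀ (by norm_num)]
    exact_mod_cast h3
  exact h2.trans (by exact_mod_cast h)

lemma norm_sq_eq' {k : ℕ} (x : EuclideanSpace ℝ (Fin k)) :
    ‖x‖ ^ 2 = ∑ j, (x j) ^ 2 := by
  rw [EuclideanSpace.norm_eq, Real.sq_sqrt (by positivity)]
  simp [Real.norm_eq_abs, sq_abs]

lemma det_median {T k : ℕ} (hT : 0 < T) (α : ℝ)
    (w : Fin T → EuclideanSpace ℝ (Fin k))
    (hbad : ((Finset.univ.filter (fun s => α < ‖w s‖ ^ 2)).card : ℝ) ≤ (T : ℝ) / 4) :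
    ‖medianVec w‖ ^ 2 ≤ 4 * α := by
  classical
  set G : Finset (Fin T) := Finset.univ.filter (fun s => ‖w s‖ ^ 2 ≤ α) with hG
  have hGcard : (3 : ℝ) * T / 4 ≤ (G.card : ℝ) := by
    have hcompl : G = (Finset.univ.filter (fun s => α < ‖w s‖ ^ 2))ᶜ := by
      ext s
      simp only [hG, Finset.mem_filter, Finset.mem_compl, Finset.mem_univ, true_and, not_lt]
    have hle : (Finset.univ.filter (fun s => α < ‖w s‖ ^ 2)).card ≤ T := by
      simpa using Finset.card_filter_le Finset.univ (fun s => α < ‖w s‖ ^ 2)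
    have hcc : G.card = T - (Finset.univ.filter (fun s => α < ‖w s‖ ^ 2)).card := by
      rw [hcompl, Finset.card_compl, Fintype.card_fin]
    rw [hcc, Nat.cast_sub hle]
    linarith
  have hα : 0 ≤ α := by
    have hne : G.Nonempty := by
      rw [← Finset.card_pos]
      by_contra h
      push_neg at h
      have h0 : G.card = 0 := by omega
      rw [h0] at hGcard
      have hTpos : (0 : ℝ) < T := by exact_mod_cast hT
      simp at hGcard
      linarith
    obtain ⟨s, hs⟩ := hne
    rw [hG, Finset.mem_filter] at hs
    exact le_trans (by positivity) hs.2
  have hcoord : ∀ j : Fin k, (T : ℝ) / 4 * (medianVec w j) ^ 2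
      ≤ ∑ s ∈ G, (w s j) ^ 2 := by
    intro j
    set m : ℝ := medianVec w j with hm
    rcases le_or_gt 0 m with hm0 | hm0
    · set H : Finset (Fin T) := Finset.univ.filter (fun s => m ≤ w s j) with hH
      have hHcard : (T : ℝ) / 2 ≤ (H.card : ℝ) := medianVal_le_count hT _
      have hinter : (T : ℝ) / 4 ≤ ((H ∩ G).card : ℝ) := by
        have h1 := Finset.card_inter_add_card_union H G
        have h2 : (H ∪ G).card ≤ T := by
          simpa using Finset.card_le_univ (H ∪ G)
        have h1' : ((H ∩ G).card : ℝ) + ((H ∪ G).card : ℝ)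
            = (H.card : ℝ) + (G.card : ℝ) := by exact_mod_cast h1
        have h2' : ((H ∪ G).card : ℝ) ≤ (T : ℝ) := by exact_mod_cast h2
        linarith
      have hbound : ∀ s ∈ H ∩ G, m ^ 2 ≤ (w s j) ^ 2 := by
        intro s hs
        rw [Finset.mem_inter, hH, Finset.mem_filter] at hs
        exact pow_le_pow_left₀ hm0 hs.1.2 2 |>.trans_eq rfl
      calc (T : ℝ) / 4 * m ^ 2 ≤ ((H ∩ G).card : ℝ) * m ^ 2 := by
            apply mul_le_mul_of_nonneg_right hinter (by positivity)
        _ = ∑ _s ∈ H ∩ G, m ^ 2 := by rw [Finset.sum_const, nsmul_eq_mul]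
        _ ≤ ∑ s ∈ H ∩ G, (w s j) ^ 2 := Finset.sum_le_sum hbound
        _ ≤ ∑ s ∈ G, (w s j) ^ 2 := by
            apply Finset.sum_le_sum_of_subset_of_nonneg (Finset.inter_subset_right)
            intro s _ _; positivity
    · set H : Finset (Fin T) := Finset.univ.filter (fun s => w s j ≤ m) with hH
      have hHcard : (T : ℝ) / 2 ≤ (H.card : ℝ) := count_le_medianVal hT _
      have hinter : (T : ℝ) / 4 ≤ ((H ∩ G).card : ℝ) := by
        have h1 := Finset.card_inter_add_card_union H G
        have h2 : (H ∪ G).card ≤ T := by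
          simpa using Finset.card_le_univ (H ∪ G)
        have h1' : ((H ∩ G).card : ℝ) + ((H ∪ G).card : ℝ)
            = (H.card : ℝ) + (G.card : ℝ) := by exact_mod_cast h1
        have h2' : ((H ∪ G).card : ℝ) ≤ (T : ℝ) := by exact_mod_cast h2
        linarith
      have hbound : ∀ s ∈ H ∩ G, m ^ 2 ≤ (w s j) ^ 2 := by
        intro s hs
        rw [Finset.mem_inter, hH, Finset.mem_filter] at hs
        have h1 : w s j ≤ m := hs.1.2
        have h2 : |m| ≤ |w s j| := by
          rw [abs_of_neg hm0]
          rcases le_or_gt (w s j) 0 with h | h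
          · rw [abs_of_nonpos h]; linarith
          · rw [abs_of_pos h]; linarith
        calc m ^ 2 = |m| ^ 2 := (sq_abs m).symm
          _ ≤ |w s j| ^ 2 := pow_le_pow_left₀ (abs_nonneg _) h2 2
          _ = (w s j) ^ 2 := sq_abs _
      calc (T : ℝ) / 4 * m ^ 2 ≤ ((H ∩ G).card : ℝ) * m ^ 2 := by
            apply mul_le_mul_of_nonneg_right hinter (by positivity)
        _ = ∑ _s ∈ H ∩ G, m ^ 2 := by rw [Finset.sum_const, nsmul_eq_mul]
        _ ≤ ∑ s ∈ H ∩ G, (w s j) ^ 2 := Finset.sum_le_sum hbound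
        _ ≤ ∑ s ∈ G, (w s j) ^ 2 := by
            apply Finset.sum_le_sum_of_subset_of_nonneg (Finset.inter_subset_right)
            intro s _ _; positivity
  have hsum : (T : ℝ) / 4 * ‖medianVec w‖ ^ 2 ≤ (T : ℝ) * α := by
    calc (T : ℝ) / 4 * ‖medianVec w‖ ^ 2
        = ∑ j, (T : ℝ) / 4 * (medianVec w j) ^ 2 := by
          rw [norm_sq_eq', Finset.mul_sum]
      _ ≤ ∑ j, ∑ s ∈ G, (w s j) ^ 2 := Finset.sum_le_sum (fun j _ => hcoord j)
      _ = ∑ s ∈ G, ‖w s‖ ^ 2 := by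
          rw [Finset.sum_comm]
          exact Finset.sum_congr rfl (fun s _ => (norm_sq_eq' (w s)).symm)
      _ ≤ ∑ s ∈ G, α := by
          apply Finset.sum_le_sum
          intro s hs
          rw [hG, Finset.mem_filter] at hs
          exact hs.2
      _ = (G.card : ℝ) * α := by rw [Finset.sum_const, nsmul_eq_mul]
      _ ≤ (T : ℝ) * α := by
          apply mul_le_mul_of_nonneg_right _ hα
          exact_mod_cast (by simpa using Finset.card_le_univ G)
  have hTpos : (0 : ℝ) < T := by exact_mod_cast hT
  nlinarith [hsum]

/-- there is an absolute constant `c > 0` such that for any i.i.d. random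
vectors `v^(1), …, v^(T)` in `ℝ^k` with `P(‖v^(s)‖² > α) ≤ 1/5` for each `s`, the
coordinatewise median satisfies `P(‖median‖² > 4α) ≤ exp(−c T)`. -/
theorem stmt1 :
    ∃ c : ℝ, 0 < c ∧
      ∀ (T k : ℕ) (Ω : Type) (_ : MeasurableSpace Ω) (μ : Measure Ω)
        (_ : IsProbabilityMeasure μ) (α : ℝ)
        (v : Fin T → Ω → EuclideanSpace ℝ (Fin k)),
        (∀ s, Measurable (v s)) →
        iIndepFun v μ →
        (∀ s s' : Fin T, IdentDistrib (v s) (v s') μ μ) →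
        (∀ s : Fin T, μ {ω | α < ‖v s ω‖ ^ 2} ≤ ENNReal.ofReal (1 / 5)) →
        μ {ω | 4 * α < ‖medianVec (fun s => v s ω)‖ ^ 2} ≤
          ENNReal.ofReal (Real.exp (-c * T)) := by
  classical
  refine ⟨Real.log (4/3) / 4 - Real.log (16/15), ?_, ?_⟩
  · have h1 : Real.log ((16/15 : ℝ) ^ 4) < Real.log (4/3) := by
      apply Real.log_lt_log (by positivity)
      norm_num
    rw [Real.log_pow] at h1
    push_cast at h1
    linarith
  intro T k Ω mΩ μ hprob α v hmeas hindep _ hp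
  set c : ℝ := Real.log (4/3) / 4 - Real.log (16/15) with hc
  rcases Nat.eq_zero_or_pos T with hT0 | hT
  · subst hT0
    have h1 : ENNReal.ofReal (Real.exp (-c * ((0:ℕ):ℝ))) = 1 := by norm_num
    rw [h1]
    exact prob_le_one
  -- probabilistic part
  set t : ℝ := Real.log (4/3) with ht
  have htpos : 0 < t := Real.log_pos (by norm_num)
  set X : Fin T → Ω → ℝ := fun s ω => if α < ‖v s ω‖ ^ 2 then (1:ℝ) else 0 with hX
  have hXmeas : ∀ s, Measurable (X s) := by
    intro s
    have hset : MeasurableSet {ω | α < ‖v s ω‖ ^ 2} :=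
      measurableSet_lt measurable_const ((hmeas s).norm.pow_const 2)
    exact Measurable.ite hset measurable_const measurable_const
  have hXindep : iIndepFun X μ := by
    have := hindep.comp (fun s (x : EuclideanSpace ℝ (Fin k)) => if α < ‖x‖ ^ 2 then (1:ℝ) else 0)
      (fun s => by
        have hset : MeasurableSet {x : EuclideanSpace ℝ (Fin k) | α < ‖x‖ ^ 2} :=
          measurableSet_lt measurable_const (measurable_norm.pow_const 2)
        exact Measurable.ite hset measurable_const measurable_const)
    exact this
  have hexp : ∀ s, (fun ω => Real.exp (t * X s ω)) = fun ω => 1 + (1/3) * X s ω := by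
    intro s
    funext ω
    by_cases h : α < ‖v s ω‖ ^ 2 <;>
      simp [hX, h, Real.exp_log, ht] <;> norm_num [Real.exp_log]
  have hXint : ∀ s, Integrable (X s) μ := by
    intro s
    have hXind : X s = Set.indicator {ω | α < ‖v s ω‖ ^ 2} (fun _ => (1:ℝ)) := by
      funext ω; simp [hX, Set.indicator_apply]
    rw [hXind]
    exact (integrable_const (1:ℝ)).indicator
      (measurableSet_lt measurable_const ((hmeas s).norm.pow_const 2))
  have hint : ∀ s, Integrable (fun ω => Real.exp (t * X s ω)) μ := by
    intro s
    rw [hexp s]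
    exact (integrable_const (1:ℝ)).add ((hXint s).const_mul _)
  have hmgf : ∀ s, mgf (X s) μ t ≤ 16/15 := by
    intro s
    rw [mgf, hexp s, integral_add (integrable_const _) ((hXint s).const_mul _),
      integral_const, integral_const_mul]
    have hEX : ∫ ω, X s ω ∂μ ≤ 1/5 := by
      have hXind : X s = Set.indicator {ω | α < ‖v s ω‖ ^ 2} (fun _ => (1:ℝ)) := by
        funext ω; simp [hX, Set.indicator_apply]
      rw [hXind, integral_indicator_const _
        (measurableSet_lt measurable_const ((hmeas s).norm.pow_const 2))]
      simp only [smul_eq_mul, mul_one]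
      have h5 : (μ {ω | α < ‖v s ω‖ ^ 2}).toReal ≤ ((ENNReal.ofReal (1/5)) : ENNReal).toReal :=
        ENNReal.toReal_mono (by simp) (hp s)
      rwa [ENNReal.toReal_ofReal (by norm_num)] at h5
    simp only [measure_univ, probReal_univ, ENNReal.toReal_one, smul_eq_mul, one_mul, mul_one]
    linarith
  have hintsum : Integrable (fun ω => Real.exp (t * (∑ s, X s) ω)) μ := by
    have := ProbabilityTheory.iIndepFun.integrable_exp_mul_sum (t := t) hXindep hXmeas
      (s := Finset.univ) (fun s _ => hint s)
    simpa using this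
  have hchern := measure_ge_le_exp_mul_mgf (μ := μ) (X := (∑ s, X s))
    ((T : ℝ)/4) htpos.le hintsum
  have hmgfsum : mgf (∑ s, X s) μ t = ∏ s, mgf (X s) μ t :=
    hXindep.mgf_sum hXmeas Finset.univ
  have hmgfprod : ∏ s : Fin T, mgf (X s) μ t ≤ (16/15) ^ T := by
    calc ∏ s : Fin T, mgf (X s) μ t ≤ ∏ _s : Fin T, (16/15 : ℝ) :=
          Finset.prod_le_prod (fun s _ => mgf_nonneg) (fun s _ => hmgf s)
      _ = (16/15) ^ T := by rw [Finset.prod_const, Finset.card_univ, Fintype.card_fin]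
  have hchern2 : (μ {ω | (T : ℝ) / 4 ≤ (∑ s, X s) ω}).toReal ≤ Real.exp (-c * T) := by
    calc (μ {ω | (T : ℝ) / 4 ≤ (∑ s, X s) ω}).toReal
        ≤ Real.exp (-t * ((T : ℝ)/4)) * mgf (∑ s, X s) μ t := hchern
      _ ≤ Real.exp (-t * ((T : ℝ)/4)) * (16/15) ^ T := by
          apply mul_le_mul_of_nonneg_left _ (Real.exp_pos _).le
          rw [hmgfsum]; exact hmgfprod
      _ = Real.exp (-c * T) := by
          rw [show ((16:ℝ)/15) ^ T = Real.exp (T * Real.log (16/15)) by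
            rw [← Real.log_pow, Real.exp_log (by positivity)],
            ← Real.exp_add]
          rw [hc, ht]
          ring_nf
  -- subset argument
  have hsubset : {ω | 4 * α < ‖medianVec (fun s => v s ω)‖ ^ 2}
      ⊆ {ω | (T : ℝ) / 4 ≤ (∑ s, X s) ω} := by
    intro ω hω
    simp only [Set.mem_setOf_eq] at hω ⊢
    by_contra h
    push_neg at h
    have hcard : ((Finset.univ.filter (fun s => α < ‖v s ω‖ ^ 2)).card : ℝ) ≤ (T : ℝ) / 4 := by
      have hb : ((Finset.univ.filter (fun s => α < ‖v s ω‖ ^ 2)).card : ℝ)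
          = (∑ s, X s) ω := by
        simp only [Finset.sum_apply, hX]
        rw [Finset.sum_boole]
      rw [hb]
      exact h.le
    exact absurd hω (not_lt.2 (det_median hT α _ hcard))
  calc μ {ω | 4 * α < ‖medianVec (fun s => v s ω)‖ ^ 2}
      ≤ μ {ω | (T : ℝ) / 4 ≤ (∑ s, X s) ω} := measure_mono hsubset
    _ ≤ ENNReal.ofReal (Real.exp (-c * T)) := by
        rw [← ENNReal.ofReal_toReal (show μ {ω | (T : ℝ) / 4 ≤ (∑ s, X s) ω} ≠ ⊤ from
          measure_ne_top _ _)]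
        exact ENNReal.ofReal_le_ofReal hchern2
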